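/- Let r, s ≥ 0 be integers with n = 2(r+s) ≥ 1, and let v ∈ (ℤ/4ℤ)^n have type (t₀, t₁, t₂, t₃). Then 4 · C(n; t₀,t₁,t₂,t₃) · |S(v,0)| = C(n; r,s,r,s) · c, where c is the coefficient of x^{t₀} y^{t₁} z^{t₂} w^{t₃} in the integer polynomial (x+y+z+w)^n + 2·((x+z)² − (y+w)²)^r·((x−z)² + (y−w)²)^s + (x+y+z+w)^{2r}(x−y+z−w)^{2s}. -/

import Mathlib

/-- The number of coordinates of `v ∈ (ℤ/4ℤ)^n` equal to `k`. -/
def typeCount {n : ℕ} (v : Fin n → ZMod 4) (k : ZMod 4) : ℕ :=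
  (Finset.univ.filter fun i => v i = k).card

/-- `v ∈ (ℤ/4ℤ)^n` has type `(t₀, t₁, t₂, t₃)`. -/
def HasType {n : ℕ} (v : Fin n → ZMod 4) (t0 t1 t2 t3 : ℕ) : Prop :=
  typeCount v 0 = t0 ∧ typeCount v 1 = t1 ∧ typeCount v 2 = t2 ∧ typeCount v 3 = t3

instance {n : ℕ} (v : Fin n → ZMod 4) (t0 t1 t2 t3 : ℕ) :
    Decidable (HasType v t0 t1 t2 t3) := by
  unfold HasType; infer_instance

/-- `|S(v, a)|`: the number of vectors `b` of type `(r, s, r, s)` with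
`v · b = a` in `ℤ/4ℤ`. -/
def Scard {n : ℕ} (r s : ℕ) (v : Fin n → ZMod 4) (a : ZMod 4) : ℕ :=
  (Finset.univ.filter fun b : Fin n → ZMod 4 =>
    HasType b r s r s ∧ (∑ i, v i * b i) = a).card

/-- The eigenvalue `λ(v) = |S(v,0)| - |S(v,2)|` of `Cay((ℤ/4ℤ)^n, S)`. -/
def lambdaEV {n : ℕ} (r s : ℕ) (v : Fin n → ZMod 4) : ℤ :=
  (Scard r s v 0 : ℤ) - (Scard r s v 2 : ℤ)

/-- The multinomial coefficient `C(n; r, s, r, s)` (with `n = 2(r+s)`). -/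
def multinomRSRS (r s : ℕ) : ℕ :=
  Nat.multinomial Finset.univ ![r, s, r, s]

open Finset MvPolynomial

set_option linter.unusedSectionVars false


open Finset MvPolynomial

section Generic
variable {κ : Type*} [Fintype κ] [DecidableEq κ] {R : Type*} [CommSemiring R]

lemma aux_prod_X_eq_monomial {n : ℕ} (b : Fin n → κ) (s : Finset (Fin n)) :
    (∏ i ∈ s, (X (b i) : MvPolynomial κ R)) =
      monomial (∑ i ∈ s, Finsupp.single (b i) 1) 1 := by
  induction s using Finset.cons_induction with
  | empty => simp [monomial_zero']
  | cons a s ha ih =>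
      rw [Finset.prod_cons, Finset.sum_cons, ih, X, monomial_mul, one_mul]

lemma aux_coeff_prod_linear {n : ℕ} (w : Fin n → κ → R) (A : κ →₀ ℕ) :
    coeff A (∏ i, ∑ c, C (w i c) * X c) =
      ∑ b ∈ univ.filter fun b : Fin n → κ => (∑ i, Finsupp.single (b i) 1) = A,
        ∏ i, w i (b i) := by
  rw [Finset.prod_univ_sum, Fintype.piFinset_univ, MvPolynomial.coeff_sum,
    Finset.sum_filter]
  refine Finset.sum_congr rfl fun b _ => ?_
  rw [Finset.prod_mul_distrib, ← map_prod (C : R →+* MvPolynomial κ R) (fun i => w i (b i))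
    Finset.univ, aux_prod_X_eq_monomial, coeff_C_mul, coeff_monomial, mul_ite, mul_one, mul_zero]

lemma aux_prod_comp {n : ℕ} {M' : Type*} [CommMonoid M'] (v : Fin n → κ) (g : κ → M') :
    ∏ i, g (v i) = ∏ k, g k ^ (univ.filter fun i => v i = k).card := by
  rw [← Finset.prod_fiberwise_of_maps_to (fun i (_ : i ∈ univ) => mem_univ (v i))
    (fun i => g (v i))]
  refine Finset.prod_congr rfl fun k _ => ?_
  rw [← Finset.prod_const]
  exact Finset.prod_congr rfl fun i hi => by rw [(Finset.mem_filter.1 hi).2]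

lemma aux_mu_apply {n : ℕ} (b : Fin n → κ) (k : κ) :
    (∑ i, Finsupp.single (b i) (1 : ℕ)) k = (univ.filter fun i => b i = k).card := by
  rw [Finsupp.finset_sum_apply, Finset.card_eq_sum_ones, Finset.sum_filter]
  exact Finset.sum_congr rfl fun i _ => by rw [Finsupp.single_apply]

lemma aux_prod_X_pow_univ (D : κ →₀ ℕ) :
    (∏ c, (X c : MvPolynomial κ R) ^ D c) = monomial D 1 := by
  rw [← MvPolynomial.prod_X_pow_eq_monomial]
  exact (Finset.prod_subset (Finset.subset_univ _) fun x _ hx => by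
    rw [Finsupp.notMem_support_iff.1 hx, pow_zero]).symm

lemma aux_card_type {n : ℕ} (T : κ →₀ ℕ) (hT : ∑ k, T k = n) :
    (univ.filter fun b : Fin n → κ => (∑ i, Finsupp.single (b i) 1) = T).card =
      Nat.multinomial univ T := by
  have h := aux_coeff_prod_linear (n := n) (fun _ (_ : κ) => (1 : ℕ)) T
  simp only [map_one, one_mul, Finset.prod_const_one, Finset.sum_const, smul_eq_mul,
    mul_one] at h
  rw [Finset.prod_const, Finset.card_univ, Fintype.card_fin] at h
  rw [← h, Finset.sum_pow_eq_sum_piAntidiag, MvPolynomial.coeff_sum]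
  have hprod : ∀ k : κ → ℕ, (∏ i ∈ univ, (X i : MvPolynomial κ ℕ) ^ k i) =
      monomial (Finsupp.equivFunOnFinite.symm k) 1 := fun k => by
    rw [← aux_prod_X_pow_univ]
    exact Finset.prod_congr rfl fun c _ => by
      rw [Finsupp.equivFunOnFinite_symm_apply_apply]
  have hmem : ⇑T ∈ Finset.piAntidiag (univ : Finset κ) n := by
    rw [Finset.mem_piAntidiag]; exact ⟨hT, fun i _ => mem_univ i⟩
  rw [Finset.sum_eq_single_of_mem (⇑T) hmem (fun k _ hne => ?_)]
  · rw [hprod, show Finsupp.equivFunOnFinite.symm ⇑T = T from Finsupp.ext fun c =>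
      Finsupp.equivFunOnFinite_symm_apply_apply _ _, ← C_eq_coe_nat, coeff_C_mul,
      coeff_monomial, if_pos rfl, mul_one, Nat.cast_id]
  · rw [hprod, ← C_eq_coe_nat, coeff_C_mul, coeff_monomial, if_neg, mul_zero]
    intro hEq
    exact hne (by rw [← hEq]; ext c; rw [Finsupp.equivFunOnFinite_symm_apply_apply])
end Generic

section Generic2
variable {κ : Type*} [Fintype κ] [DecidableEq κ] {R : Type*} [CommSemiring R]

lemma aux_coeff_prod_pow {n : ℕ} (M : κ → κ → R) (u : Fin n → κ) (A : κ →₀ ℕ) :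
    coeff A (∏ k, (∑ c, C (M k c) * X c) ^ (univ.filter fun i => u i = k).card) =
      ∑ b ∈ univ.filter fun b : Fin n → κ => (∑ i, Finsupp.single (b i) 1) = A,
        ∏ i, M (u i) (b i) := by
  rw [← aux_prod_comp u (fun k => ∑ c, C (M k c) * X c)]
  exact aux_coeff_prod_linear (fun i c => M (u i) c) A

lemma aux_half {n : ℕ} (M : κ → κ → R) (t : κ → ℕ) (ht : ∑ k, t k = n) (A : κ →₀ ℕ) :
    (Nat.multinomial univ t : R) * coeff A (∏ k, (∑ c, C (M k c) * X c) ^ t k) =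
      ∑ u ∈ univ.filter fun u : Fin n → κ =>
          (∑ i, Finsupp.single (u i) 1) = Finsupp.equivFunOnFinite.symm t,
        ∑ b ∈ univ.filter fun b : Fin n → κ => (∑ i, Finsupp.single (b i) 1) = A,
          ∏ i, M (u i) (b i) := by
  have hcard := aux_card_type (n := n) (Finsupp.equivFunOnFinite.symm t)
    (by rw [← ht]; exact Finset.sum_congr rfl fun k _ =>
      Finsupp.equivFunOnFinite_symm_apply_apply _ _)
  have hmc : Nat.multinomial univ ⇑(Finsupp.equivFunOnFinite.symm t) =
      Nat.multinomial univ t :=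
    Nat.multinomial_congr fun k _ => Finsupp.equivFunOnFinite_symm_apply_apply _ _
  have step : ∀ u ∈ (univ.filter fun u : Fin n → κ =>
      (∑ i, Finsupp.single (u i) 1) = Finsupp.equivFunOnFinite.symm t),
      (∑ b ∈ univ.filter fun b : Fin n → κ => (∑ i, Finsupp.single (b i) 1) = A,
        ∏ i, M (u i) (b i)) = coeff A (∏ k, (∑ c, C (M k c) * X c) ^ t k) := by
    intro u hu
    have hu' : ∀ k, (univ.filter fun i => u i = k).card = t k := fun k => by
      rw [← aux_mu_apply u k, (Finset.mem_filter.1 hu).2,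
        Finsupp.equivFunOnFinite_symm_apply_apply]
    rw [← aux_coeff_prod_pow M u A]
    congr 1
    exact Finset.prod_congr rfl fun k _ => by rw [hu' k]
  rw [Finset.sum_congr rfl step, Finset.sum_const, hcard, nsmul_eq_mul, hmc]

lemma aux_dual {n : ℕ} (M : κ → κ → R) (t a : κ → ℕ) (ht : ∑ k, t k = n)
    (ha : ∑ c, a c = n) :
    (Nat.multinomial univ t : R) *
        coeff (Finsupp.equivFunOnFinite.symm a) (∏ k, (∑ c, C (M k c) * X c) ^ t k) =
      (Nat.multinomial univ a : R) *
        coeff (Finsupp.equivFunOnFinite.symm t) (∏ c, (∑ k, C (M k c) * X k) ^ a c) := by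
  rw [aux_half M t ht, aux_half (fun c k => M k c) a ha]
  exact Finset.sum_comm

end Generic2

section ZMod4

lemma zmod4_univ : (Finset.univ : Finset (ZMod 4)) = {0, 1, 2, 3} := by decide

lemma zmod4_sum {M : Type*} [AddCommMonoid M] (f : ZMod 4 → M) :
    ∑ j, f j = f 0 + (f 1 + (f 2 + f 3)) := by
  rw [zmod4_univ]
  rw [show ({0, 1, 2, 3} : Finset (ZMod 4)) = insert 0 (insert 1 (insert 2 {3})) from rfl]
  rw [Finset.sum_insert (by decide), Finset.sum_insert (by decide),
    Finset.sum_insert (by decide), Finset.sum_singleton]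

lemma zmod4_prod {M : Type*} [CommMonoid M] (f : ZMod 4 → M) :
    ∏ j, f j = f 0 * (f 1 * (f 2 * f 3)) := by
  rw [zmod4_univ]
  rw [show ({0, 1, 2, 3} : Finset (ZMod 4)) = insert 0 (insert 1 (insert 2 {3})) from rfl]
  rw [Finset.prod_insert (by decide), Finset.prod_insert (by decide),
    Finset.prod_insert (by decide), Finset.prod_singleton]

lemma zmod4_cases (k : ZMod 4) : k = 0 ∨ k = 1 ∨ k = 2 ∨ k = 3 := by revert k; decide

end ZMod4

section Char

/-- The imaginary unit in the Gaussian integers. -/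
def i4 : GaussianInt := ⟨0, 1⟩

/-- The additive character `a ↦ i^a` of `ℤ/4ℤ`. -/
def echar (a : ZMod 4) : GaussianInt := i4 ^ a.val

lemma echar_zero : echar 0 = 1 := by decide

lemma echar_add (a b : ZMod 4) : echar (a + b) = echar a * echar b := by
  revert a b; decide

lemma echar_orth (a : ZMod 4) :
    ∑ j : ZMod 4, echar (j * a) = if a = 0 then 4 else 0 := by
  revert a; decide

lemma echar_sum {β : Type*} (s : Finset β) (f : β → ZMod 4) :
    echar (∑ i ∈ s, f i) = ∏ i ∈ s, echar (f i) := by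
  induction s using Finset.cons_induction with
  | empty => simpa using echar_zero
  | cons a s ha ih => rw [Finset.sum_cons, Finset.prod_cons, echar_add, ih]

end Char

section Forms

/-- The column-type function `(r, s, r, s)` on `ℤ/4ℤ`. -/
def auxAlpha (r s : ℕ) : ZMod 4 → ℕ :=
  fun c => if c = 0 then r else if c = 1 then s else if c = 2 then r else s

lemma auxAlpha_0 (r s : ℕ) : auxAlpha r s 0 = r := rfl
lemma auxAlpha_1 (r s : ℕ) : auxAlpha r s 1 = s := by
  rw [auxAlpha, if_neg (by decide), if_pos rfl]
lemma auxAlpha_2 (r s : ℕ) : auxAlpha r s 2 = r := by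
  rw [auxAlpha, if_neg (by decide), if_neg (by decide), if_pos rfl]
lemma auxAlpha_3 (r s : ℕ) : auxAlpha r s 3 = s := by
  rw [auxAlpha, if_neg (by decide), if_neg (by decide), if_neg (by decide)]

lemma form0 : (∑ k : ZMod 4, C (echar (k * 0)) * X k : MvPolynomial (ZMod 4) GaussianInt) =
    X 0 + X 1 + X 2 + X 3 := by
  rw [zmod4_sum]
  rw [show echar ((0 : ZMod 4) * 0) = 1 from by decide,
    show echar ((1 : ZMod 4) * 0) = 1 from by decide,
    show echar ((2 : ZMod 4) * 0) = 1 from by decide,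
    show echar ((3 : ZMod 4) * 0) = 1 from by decide, map_one]
  ring

lemma form1 : (∑ k : ZMod 4, C (echar (k * 1)) * X k : MvPolynomial (ZMod 4) GaussianInt) =
    X 0 + C i4 * X 1 - X 2 - C i4 * X 3 := by
  rw [zmod4_sum]
  rw [show echar ((0 : ZMod 4) * 1) = 1 from by decide,
    show echar ((1 : ZMod 4) * 1) = i4 from by decide,
    show echar ((2 : ZMod 4) * 1) = -1 from by decide,
    show echar ((3 : ZMod 4) * 1) = -i4 from by decide, map_one, map_neg, map_neg, map_one]
  ring

lemma form2 : (∑ k : ZMod 4, C (echar (k * 2)) * X k : MvPolynomial (ZMod 4) GaussianInt) =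
    X 0 - X 1 + X 2 - X 3 := by
  rw [zmod4_sum]
  rw [show echar ((0 : ZMod 4) * 2) = 1 from by decide,
    show echar ((1 : ZMod 4) * 2) = -1 from by decide,
    show echar ((2 : ZMod 4) * 2) = 1 from by decide,
    show echar ((3 : ZMod 4) * 2) = -1 from by decide, map_one, map_neg, map_one]
  ring

lemma form3 : (∑ k : ZMod 4, C (echar (k * 3)) * X k : MvPolynomial (ZMod 4) GaussianInt) =
    X 0 - C i4 * X 1 - X 2 + C i4 * X 3 := by
  rw [zmod4_sum]
  rw [show echar ((0 : ZMod 4) * 3) = 1 from by decide,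
    show echar ((1 : ZMod 4) * 3) = -i4 from by decide,
    show echar ((2 : ZMod 4) * 3) = -1 from by decide,
    show echar ((3 : ZMod 4) * 3) = i4 from by decide, map_one, map_neg, map_neg, map_one]
  ring

end Forms

section SumJ

lemma sum_j_eq (r s n : ℕ) (hn : n = 2 * (r + s)) :
    (∑ j : ZMod 4, ∏ c : ZMod 4,
        (∑ k : ZMod 4, C (echar (j * (k * c))) * X k) ^ auxAlpha r s c) =
      MvPolynomial.map (Int.castRingHom GaussianInt)
        ((X 0 + X 1 + X 2 + X 3) ^ n +
          2 * ((X 0 + X 2) ^ 2 - (X 1 + X 3) ^ 2) ^ r *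
            ((X 0 - X 2) ^ 2 + (X 1 - X 3) ^ 2) ^ s +
          (X 0 + X 1 + X 2 + X 3) ^ (2 * r) * (X 0 - X 1 + X 2 - X 3) ^ (2 * s) :
          MvPolynomial (ZMod 4) ℤ) := by
  have hswap : ∀ j c : ZMod 4,
      (∑ k : ZMod 4, C (echar (j * (k * c))) * X k :
          MvPolynomial (ZMod 4) GaussianInt) =
        ∑ k : ZMod 4, C (echar (k * (j * c))) * X k := fun j c =>
    Finset.sum_congr rfl fun k _ => by rw [show j * (k * c) = k * (j * c) from by ring]
  simp only [hswap]
  rw [zmod4_sum (fun j => ∏ c : ZMod 4,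
    (∑ k : ZMod 4, C (echar (k * (j * c))) * X k) ^ auxAlpha r s c)]
  simp only [zmod4_prod (fun c => (∑ k : ZMod 4,
      C (echar (k * ((0 : ZMod 4) * c))) * X k) ^ auxAlpha r s c),
    zmod4_prod (fun c => (∑ k : ZMod 4,
      C (echar (k * ((1 : ZMod 4) * c))) * X k) ^ auxAlpha r s c),
    zmod4_prod (fun c => (∑ k : ZMod 4,
      C (echar (k * ((2 : ZMod 4) * c))) * X k) ^ auxAlpha r s c),
    zmod4_prod (fun c => (∑ k : ZMod 4,
      C (echar (k * ((3 : ZMod 4) * c))) * X k) ^ auxAlpha r s c)]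
  simp only [show (0 : ZMod 4) * 0 = 0 from by decide,
    show (0 : ZMod 4) * 1 = 0 from by decide,
    show (0 : ZMod 4) * 2 = 0 from by decide,
    show (0 : ZMod 4) * 3 = 0 from by decide,
    show (1 : ZMod 4) * 0 = 0 from by decide,
    show (1 : ZMod 4) * 1 = 1 from by decide,
    show (1 : ZMod 4) * 2 = 2 from by decide,
    show (1 : ZMod 4) * 3 = 3 from by decide,
    show (2 : ZMod 4) * 0 = 0 from by decide,
    show (2 : ZMod 4) * 1 = 2 from by decide,
    show (2 : ZMod 4) * 2 = 0 from by decide,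
    show (2 : ZMod 4) * 3 = 2 from by decide,
    show (3 : ZMod 4) * 0 = 0 from by decide,
    show (3 : ZMod 4) * 1 = 3 from by decide,
    show (3 : ZMod 4) * 2 = 2 from by decide,
    show (3 : ZMod 4) * 3 = 1 from by decide]
  simp only [auxAlpha_0, auxAlpha_1, auxAlpha_2, auxAlpha_3, form0, form1, form2, form3]
  simp only [map_add, map_mul, map_pow, map_sub, map_ofNat, MvPolynomial.map_X]
  have hI : (C i4 : MvPolynomial (ZMod 4) GaussianInt) ^ 2 = -1 := by
    rw [← map_pow, show i4 ^ 2 = (-1 : GaussianInt) from by decide, map_neg, map_one]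
  have hSA : ((X 0 + X 1 + X 2 + X 3) * (X 0 - X 1 + X 2 - X 3) :
      MvPolynomial (ZMod 4) GaussianInt) = (X 0 + X 2) ^ 2 - (X 1 + X 3) ^ 2 := by ring
  have hBB : ((X 0 + C i4 * X 1 - X 2 - C i4 * X 3) *
      (X 0 - C i4 * X 1 - X 2 + C i4 * X 3) : MvPolynomial (ZMod 4) GaussianInt) =
      (X 0 - X 2) ^ 2 + (X 1 - X 3) ^ 2 := by
    linear_combination (-((X 1 : MvPolynomial (ZMod 4) GaussianInt) - X 3) ^ 2) * hI
  have hp0 : ((X 0 + X 1 + X 2 + X 3 : MvPolynomial (ZMod 4) GaussianInt) ^ r *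
      ((X 0 + X 1 + X 2 + X 3) ^ s * ((X 0 + X 1 + X 2 + X 3) ^ r *
        (X 0 + X 1 + X 2 + X 3) ^ s))) = (X 0 + X 1 + X 2 + X 3) ^ n := by
    rw [hn, show 2 * (r + s) = r + (s + (r + s)) from by ring, pow_add, pow_add, pow_add]
  have hp2 : ((X 0 + X 1 + X 2 + X 3 : MvPolynomial (ZMod 4) GaussianInt) ^ r *
      ((X 0 - X 1 + X 2 - X 3) ^ s * ((X 0 + X 1 + X 2 + X 3) ^ r *
        (X 0 - X 1 + X 2 - X 3) ^ s))) =
      (X 0 + X 1 + X 2 + X 3) ^ (2 * r) * (X 0 - X 1 + X 2 - X 3) ^ (2 * s) := by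
    rw [two_mul, two_mul, pow_add, pow_add]; ring
  have hp13 : ((X 0 + X 1 + X 2 + X 3 : MvPolynomial (ZMod 4) GaussianInt) ^ r *
        ((X 0 + C i4 * X 1 - X 2 - C i4 * X 3) ^ s * ((X 0 - X 1 + X 2 - X 3) ^ r *
          (X 0 - C i4 * X 1 - X 2 + C i4 * X 3) ^ s))) +
      ((X 0 + X 1 + X 2 + X 3) ^ r *
        ((X 0 - C i4 * X 1 - X 2 + C i4 * X 3) ^ s * ((X 0 - X 1 + X 2 - X 3) ^ r *
          (X 0 + C i4 * X 1 - X 2 - C i4 * X 3) ^ s))) =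
      2 * ((X 0 + X 2) ^ 2 - (X 1 + X 3) ^ 2) ^ r *
        ((X 0 - X 2) ^ 2 + (X 1 - X 3) ^ 2) ^ s := by
    rw [← hSA, ← hBB, mul_pow, mul_pow]; ring
  linear_combination hp0 + hp13 + hp2

end SumJ

/-- The identification of `ℤ/4ℤ` with `Fin 4`. -/
def Efin : ZMod 4 → Fin 4 := fun c => ⟨ZMod.val c, ZMod.val_lt c⟩

lemma Efin_inj : Function.Injective Efin := by decide





open MvPolynomial in
/-- `4·C(n; t₀,t₁,t₂,t₃)·|S(v,0)|` equals `C(n; r,s,r,s)` times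
the coefficient of `x^{t₀} y^{t₁} z^{t₂} w^{t₃}` in
`(x+y+z+w)^n + 2((x+z)²-(y+w)²)^r((x-z)²+(y-w)²)^s + (x+y+z+w)^{2r}(x-y+z-w)^{2s}`. -/
theorem S0_formula (r s n : ℕ) (hn : n = 2 * (r + s)) (hn1 : 1 ≤ n)
    (v : Fin n → ZMod 4) (t0 t1 t2 t3 : ℕ) (hv : HasType v t0 t1 t2 t3) :
    (4 * Nat.multinomial Finset.univ ![t0, t1, t2, t3] * Scard r s v 0 : ℤ) =
      (multinomRSRS r s : ℤ) *
        MvPolynomial.coeff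
          (Finsupp.single 0 t0 + Finsupp.single 1 t1 +
            Finsupp.single 2 t2 + Finsupp.single 3 t3)
          ((X 0 + X 1 + X 2 + X 3) ^ n +
            2 * ((X 0 + X 2) ^ 2 - (X 1 + X 3) ^ 2) ^ r *
              ((X 0 - X 2) ^ 2 + (X 1 - X 3) ^ 2) ^ s +
            (X 0 + X 1 + X 2 + X 3) ^ (2 * r) *
              (X 0 - X 1 + X 2 - X 3) ^ (2 * s) :
            MvPolynomial (Fin 4) ℤ) := by
  classical
  set P_int : MvPolynomial (ZMod 4) ℤ :=
    (X 0 + X 1 + X 2 + X 3) ^ n +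
      2 * ((X 0 + X 2) ^ 2 - (X 1 + X 3) ^ 2) ^ r *
        ((X 0 - X 2) ^ 2 + (X 1 - X 3) ^ 2) ^ s +
      (X 0 + X 1 + X 2 + X 3) ^ (2 * r) * (X 0 - X 1 + X 2 - X 3) ^ (2 * s) with hP
  set Aα : ZMod 4 →₀ ℕ := Finsupp.equivFunOnFinite.symm (auxAlpha r s) with hAαdef
  set At : ZMod 4 →₀ ℕ :=
    Finsupp.equivFunOnFinite.symm (fun k : ZMod 4 => typeCount v k) with hAtdef
  -- fiber sums
  have htsum : ∑ k : ZMod 4, typeCount v k = n := by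
    have h := Finset.card_eq_sum_card_fiberwise
      (fun (i : Fin n) (_ : i ∈ Finset.univ) => Finset.mem_univ (v i))
    simp only [Finset.card_univ, Fintype.card_fin] at h
    exact h.symm
  have hasum : ∑ c : ZMod 4, auxAlpha r s c = n := by
    rw [zmod4_sum, auxAlpha_0, auxAlpha_1, auxAlpha_2, auxAlpha_3]; omega
  -- bridge between type predicates
  have bridge : ∀ b : Fin n → ZMod 4,
      ((∑ i, Finsupp.single (b i) (1 : ℕ)) = Aα) ↔ HasType b r s r s := by
    intro b
    constructor
    · intro h
      have hk : ∀ k : ZMod 4, typeCount b k = auxAlpha r s k := fun k => by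
        have h' := DFunLike.congr_fun h k
        rw [aux_mu_apply, hAαdef, Finsupp.equivFunOnFinite_symm_apply_apply] at h'
        exact h'
      exact ⟨by rw [hk 0, auxAlpha_0], by rw [hk 1, auxAlpha_1],
        by rw [hk 2, auxAlpha_2], by rw [hk 3, auxAlpha_3]⟩
    · rintro ⟨h0, h1, h2, h3⟩
      ext k
      rw [aux_mu_apply, hAαdef, Finsupp.equivFunOnFinite_symm_apply_apply]
      rcases zmod4_cases k with rfl | rfl | rfl | rfl
      · rw [auxAlpha_0, ← h0]; rfl
      · rw [auxAlpha_1, ← h1]; rfl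
      · rw [auxAlpha_2, ← h2]; rfl
      · rw [auxAlpha_3, ← h3]; rfl
  -- orthogonality step
  have hj : ∀ j : ZMod 4,
      MvPolynomial.coeff Aα (∏ k : ZMod 4,
        (∑ c : ZMod 4, C (echar (j * (k * c))) * X c) ^ typeCount v k) =
      ∑ b ∈ Finset.univ.filter
          (fun b : Fin n → ZMod 4 => (∑ i, Finsupp.single (b i) 1) = Aα),
        echar (j * ∑ i, v i * b i) := by
    intro j
    have e1 : (∏ k : ZMod 4,
        (∑ c : ZMod 4, C (echar (j * (k * c))) * X c) ^ typeCount v k) =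
        ∏ i, ∑ c : ZMod 4, C (echar (j * (v i * c))) * X c := by
      simp only [typeCount]
      exact (aux_prod_comp v
        (fun k => ∑ c : ZMod 4, C (echar (j * (k * c))) * X c)).symm
    rw [e1, aux_coeff_prod_linear (fun i c => echar (j * (v i * c))) Aα]
    refine Finset.sum_congr rfl fun b _ => ?_
    rw [Finset.mul_sum, echar_sum]
  have key1 : (∑ j : ZMod 4, MvPolynomial.coeff Aα (∏ k : ZMod 4,
      (∑ c : ZMod 4, C (echar (j * (k * c))) * X c) ^ typeCount v k)) =
      4 * (Scard r s v 0 : GaussianInt) := by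
    rw [Finset.sum_congr rfl fun j _ => hj j, Finset.sum_comm]
    rw [Finset.sum_congr rfl (fun b _ =>
      echar_orth (∑ i, v i * b i))]
    rw [← Finset.sum_filter, Finset.filter_filter, Finset.sum_const]
    have hcards : (Finset.univ.filter fun b : Fin n → ZMod 4 =>
        ((∑ i, Finsupp.single (b i) (1 : ℕ)) = Aα ∧ (∑ i, v i * b i) = 0)).card =
        Scard r s v 0 := by
      rw [Scard]
      congr 1
      ext b
      simp only [Finset.mem_filter, Finset.mem_univ, true_and]
      exact and_congr_left' (bridge b)
    rw [hcards, nsmul_eq_mul, mul_comm]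
  -- duality step
  have main : ((Nat.multinomial Finset.univ (fun k : ZMod 4 => typeCount v k)) :
      GaussianInt) * (4 * (Scard r s v 0 : GaussianInt)) =
      (Nat.multinomial Finset.univ (auxAlpha r s) : GaussianInt) *
        MvPolynomial.coeff At
          (MvPolynomial.map (Int.castRingHom GaussianInt) P_int) := by
    rw [← sum_j_eq r s n hn, ← key1, Finset.mul_sum, MvPolynomial.coeff_sum,
      Finset.mul_sum]
    refine Finset.sum_congr rfl fun j _ => ?_
    exact aux_dual (fun k c => echar (j * (k * c))) (fun k => typeCount v k)
      (auxAlpha r s) htsum hasum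
  -- transfer to Fin 4
  have hrename : MvPolynomial.rename Efin P_int =
      ((X 0 + X 1 + X 2 + X 3) ^ n +
        2 * ((X 0 + X 2) ^ 2 - (X 1 + X 3) ^ 2) ^ r *
          ((X 0 - X 2) ^ 2 + (X 1 - X 3) ^ 2) ^ s +
        (X 0 + X 1 + X 2 + X 3) ^ (2 * r) * (X 0 - X 1 + X 2 - X 3) ^ (2 * s) :
        MvPolynomial (Fin 4) ℤ) := by
    rw [hP]
    simp only [map_add, map_mul, map_pow, map_sub, MvPolynomial.rename_X, map_ofNat,
      show Efin 0 = 0 from by decide, show Efin 1 = 1 from by decide,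
      show Efin 2 = 2 from by decide, show Efin 3 = 3 from by decide]
  have hAt : At = Finsupp.single (0 : ZMod 4) t0 + Finsupp.single 1 t1 +
      Finsupp.single 2 t2 + Finsupp.single 3 t3 := by
    ext k
    rw [hAtdef, Finsupp.equivFunOnFinite_symm_apply_apply]
    rcases zmod4_cases k with rfl | rfl | rfl | rfl <;>
      simp (config := { decide := true })
        [Finsupp.single_apply, hv.1, hv.2.1, hv.2.2.1, hv.2.2.2]
  have hDmap : Finsupp.mapDomain Efin At =
      (Finsupp.single (0 : Fin 4) t0 + Finsupp.single 1 t1 +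
        Finsupp.single 2 t2 + Finsupp.single 3 t3) := by
    rw [hAt]
    simp only [Finsupp.mapDomain_add, Finsupp.mapDomain_single,
      show Efin 0 = 0 from by decide, show Efin 1 = 1 from by decide,
      show Efin 2 = 2 from by decide, show Efin 3 = 3 from by decide]
  have hcoeff : MvPolynomial.coeff
      (Finsupp.single (0 : Fin 4) t0 + Finsupp.single 1 t1 +
        Finsupp.single 2 t2 + Finsupp.single 3 t3)
      ((X 0 + X 1 + X 2 + X 3) ^ n +
        2 * ((X 0 + X 2) ^ 2 - (X 1 + X 3) ^ 2) ^ r *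
          ((X 0 - X 2) ^ 2 + (X 1 - X 3) ^ 2) ^ s +
        (X 0 + X 1 + X 2 + X 3) ^ (2 * r) * (X 0 - X 1 + X 2 - X 3) ^ (2 * s) :
        MvPolynomial (Fin 4) ℤ) = MvPolynomial.coeff At P_int := by
    rw [← hrename, ← hDmap, MvPolynomial.coeff_rename_mapDomain Efin Efin_inj]
  -- multinomial bookkeeping
  have hmt : Nat.multinomial Finset.univ (fun k : ZMod 4 => typeCount v k) =
      Nat.multinomial Finset.univ ![t0, t1, t2, t3] := by
    rw [Nat.multinomial, Nat.multinomial, zmod4_sum, zmod4_prod,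
      Fin.sum_univ_four, Fin.prod_univ_four, hv.1, hv.2.1, hv.2.2.1, hv.2.2.2]
    simp only [Matrix.cons_val_zero, Matrix.cons_val_one, Matrix.head_cons,
      Matrix.cons_val_two, Matrix.tail_cons, Matrix.cons_val_three]
    congr 1
    · rw [show t0 + (t1 + (t2 + t3)) = t0 + t1 + t2 + t3 from by omega]
    · ring
  have hma : Nat.multinomial Finset.univ (auxAlpha r s) = multinomRSRS r s := by
    rw [multinomRSRS, Nat.multinomial, Nat.multinomial, zmod4_sum, zmod4_prod,
      Fin.sum_univ_four, Fin.prod_univ_four, auxAlpha_0, auxAlpha_1, auxAlpha_2,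
      auxAlpha_3]
    simp only [Matrix.cons_val_zero, Matrix.cons_val_one, Matrix.head_cons,
      Matrix.cons_val_two, Matrix.tail_cons, Matrix.cons_val_three]
    congr 1
    · rw [show r + (s + (r + s)) = r + s + r + s from by omega]
    · ring
  rw [hcoeff, ← hmt, ← hma]
  apply (Int.cast_injective (α := GaussianInt))
  push_cast
  rw [show ((MvPolynomial.coeff At P_int : ℤ) : GaussianInt) =
    MvPolynomial.coeff At (MvPolynomial.map (Int.castRingHom GaussianInt) P_int) from
    by rw [MvPolynomial.coeff_map]; rfl]
  linear_combination main
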